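/- Let A be a real symmetric copositive matrix of order n, and suppose there exists a nonzero entrywise nonnegative vector u ∈ ℝⁿ with uᵀAu = 0 such that u has at least n−2 nonzero entries and the vector Au has at least n−1 entries equal to 0. Then A is SPN. -/

import Mathlib

open Matrix

/-- A real symmetric matrix `A` is *copositive* if `xᵀAx ≥ 0` for every
entrywise nonnegative vector `x`. -/
def Copositive {ι : Type*} [Fintype ι] (A : Matrix ι ι ℝ) : Prop :=
  ∀ x : ι → ℝ, (∀ i, 0 ≤ x i) → 0 ≤ x ⬝ᵥ A.mulVec x

/-- A real symmetric matrix is *SPN* if it is the sum of a positive semidefinite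
matrix and a symmetric entrywise nonnegative matrix. -/
def IsSPN {ι : Type*} [Fintype ι] (A : Matrix ι ι ℝ) : Prop :=
  ∃ P N : Matrix ι ι ℝ, P.PosSemidef ∧ N.IsSymm ∧ (∀ i j, 0 ≤ N i j) ∧ A = P + N

set_option maxHeartbeats 1000000

section CopositiveSPNAux

variable {n : ℕ}

lemma quad_key {ε α β γ : ℝ} (hε : 0 < ε)
    (h : ∀ s t : ℝ, |s| ≤ ε → 0 ≤ t → 0 ≤ α * s ^ 2 + 2 * β * s * t + γ * t ^ 2) :
    0 ≤ α ∧ 0 ≤ γ ∧ β ^ 2 ≤ α * γ := by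
  have hα : 0 ≤ α := by
    have := h ε 0 (by rw [abs_of_pos hε]) le_rfl
    nlinarith [mul_pos hε hε]
  have hγ : 0 ≤ γ := by
    have := h 0 1 (by simp [hε.le]) zero_le_one
    nlinarith
  have hall : ∀ s t : ℝ, 0 ≤ t → 0 ≤ α * s ^ 2 + 2 * β * s * t + γ * t ^ 2 := by
    intro s t ht
    have hl : 0 < |s| + 1 := by positivity
    have hc : 0 < ε / (|s| + 1) := by positivity
    have habs : |ε / (|s| + 1) * s| ≤ ε := by
      rw [abs_mul, abs_of_pos hc, div_mul_eq_mul_div, div_le_iff₀ hl]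
      nlinarith [abs_nonneg s, hε.le, abs_nonneg s]
    have := h (ε / (|s| + 1) * s) (ε / (|s| + 1) * t) habs (by positivity)
    nlinarith [sq_nonneg (ε / (|s| + 1)), mul_pos hc hc]
  refine ⟨hα, hγ, ?_⟩
  rcases eq_or_lt_of_le hα with hα0 | hα0
  · have hβ : β = 0 := by
      by_contra hβ
      have := hall (-(γ + 1) / (2 * β)) 1 zero_le_one
      have h2 : 2 * β * (-(γ + 1) / (2 * β)) = -(γ + 1) := by field_simp
      nlinarith
    rw [hβ, ← hα0]; simp
  · have := hall (-β) α hα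
    nlinarith


lemma dot_mulVec_symm' (A : Matrix (Fin n) (Fin n) ℝ) (hA : A.IsSymm) (x y : Fin n → ℝ) :
    x ⬝ᵥ A.mulVec y = y ⬝ᵥ A.mulVec x := by
  rw [dotProduct_mulVec, ← Matrix.vecMul_transpose, hA.eq, dotProduct_comm]

-- expansion of (x+y)ᵀA(x+y)
lemma qf_add (A : Matrix (Fin n) (Fin n) ℝ) (hA : A.IsSymm) (x y : Fin n → ℝ) :
    (x + y) ⬝ᵥ A.mulVec (x + y)
      = x ⬝ᵥ A.mulVec x + 2 * (y ⬝ᵥ A.mulVec x) + y ⬝ᵥ A.mulVec y := by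
  rw [Matrix.mulVec_add, dotProduct_add, add_dotProduct, add_dotProduct,
    dot_mulVec_symm' A hA x y]
  ring

lemma qf_smul (A : Matrix (Fin n) (Fin n) ℝ) (s : ℝ) (x y : Fin n → ℝ) :
    (s • x) ⬝ᵥ A.mulVec y = s * (x ⬝ᵥ A.mulVec y) := by
  rw [smul_dotProduct]; rfl

lemma mulVec_nonneg_of_zero (A : Matrix (Fin n) (Fin n) ℝ) (hA : A.IsSymm) (hcop : Copositive A)
    (u : Fin n → ℝ) (hu0 : ∀ i, 0 ≤ u i) (huz : u ⬝ᵥ A.mulVec u = 0) (i : Fin n) :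
    0 ≤ A.mulVec u i := by
  by_contra hneg
  push_neg at hneg
  set β := A.mulVec u i with hβ
  set a := A i i with ha
  set t : ℝ := -β / (|a| + 1) with htdef
  have hβ0 : β < 0 := hneg
  have hl : (0:ℝ) < |a| + 1 := by positivity
  have ht : 0 < t := by
    rw [htdef]; exact div_pos (neg_pos.2 hβ0) hl
  have hx : ∀ j, 0 ≤ (u + t • (Pi.single i 1 : Fin n → ℝ)) j := by
    intro j
    rcases eq_or_ne j i with rfl | hji
    · simp only [Pi.add_apply, Pi.smul_apply, Pi.single_eq_same, smul_eq_mul, mul_one]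
      exact add_nonneg (hu0 j) ht.le
    · simp [Pi.single_eq_of_ne hji, hu0 j]
  have hq := hcop _ hx
  rw [qf_add A hA, huz] at hq
  have h1 : (t • (Pi.single i 1 : Fin n → ℝ)) ⬝ᵥ A.mulVec u = t * β := by
    rw [qf_smul, single_dotProduct, one_mul]
  have h2 : (t • (Pi.single i 1 : Fin n → ℝ)) ⬝ᵥ A.mulVec (t • (Pi.single i 1 : Fin n → ℝ)) = t * t * a := by
    rw [Matrix.mulVec_smul, dotProduct_smul, smul_dotProduct, Matrix.mulVec_single_one,
      single_dotProduct]
    simp only [smul_eq_mul, mul_one, one_mul, Matrix.col_apply]; ring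
  rw [h1, h2] at hq
  -- 0 ≤ 0 + 2 t β + t² a with t = -β/(|a|+1)
  have haabs : t * t * a ≤ t * t * |a| := by
    have := le_abs_self a
    nlinarith [mul_pos ht ht]
  have ht2 : t * (|a| + 1) = -β := by
    rw [htdef]; field_simp
  nlinarith [mul_pos ht ht, mul_pos ht hl]

lemma comp_slack (A : Matrix (Fin n) (Fin n) ℝ) (hA : A.IsSymm) (hcop : Copositive A)
    (u : Fin n → ℝ) (hu0 : ∀ i, 0 ≤ u i) (huz : u ⬝ᵥ A.mulVec u = 0) (i : Fin n)
    (hui : u i ≠ 0) : A.mulVec u i = 0 := by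
  have hterms : ∀ j ∈ Finset.univ, 0 ≤ u j * A.mulVec u j :=
    fun j _ => mul_nonneg (hu0 j) (mulVec_nonneg_of_zero A hA hcop u hu0 huz j)
  have hsum : ∑ j, u j * A.mulVec u j = 0 := huz
  have := (Finset.sum_eq_zero_iff_of_nonneg hterms).1 hsum i (Finset.mem_univ i)
  rcases mul_eq_zero.1 this with h | h
  · exact absurd h hui
  · exact h

lemma qf_add' (A : Matrix (Fin n) (Fin n) ℝ) (hA : A.IsSymm) (x y : Fin n → ℝ) :
    (x + y) ⬝ᵥ A.mulVec (x + y)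
      = x ⬝ᵥ A.mulVec x + 2 * (y ⬝ᵥ A.mulVec x) + y ⬝ᵥ A.mulVec y := by
  rw [Matrix.mulVec_add, dotProduct_add, add_dotProduct, add_dotProduct,
    dot_mulVec_symm' A hA x y]
  ring

lemma smul_dot_mulVec (A : Matrix (Fin n) (Fin n) ℝ) (s t : ℝ) (x y : Fin n → ℝ) :
    (s • x) ⬝ᵥ A.mulVec (t • y) = s * t * (x ⬝ᵥ A.mulVec y) := by
  rw [Matrix.mulVec_smul, dotProduct_smul, smul_dotProduct]
  simp only [smul_eq_mul]; ring

lemma qf_comb (A : Matrix (Fin n) (Fin n) ℝ) (hA : A.IsSymm) (u z e : Fin n → ℝ) (s t : ℝ) :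
    (u + s • z + t • e) ⬝ᵥ A.mulVec (u + s • z + t • e)
      = u ⬝ᵥ A.mulVec u + 2 * s * (z ⬝ᵥ A.mulVec u) + 2 * t * (e ⬝ᵥ A.mulVec u)
        + s ^ 2 * (z ⬝ᵥ A.mulVec z) + 2 * s * t * (e ⬝ᵥ A.mulVec z)
        + t ^ 2 * (e ⬝ᵥ A.mulVec e) := by
  rw [qf_add' A hA (u + s • z) (t • e), qf_add' A hA u (s • z)]
  rw [Matrix.mulVec_add, dotProduct_add, smul_dot_mulVec]
  have h1 : (s • z) ⬝ᵥ A.mulVec u = s * (z ⬝ᵥ A.mulVec u) := by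
    rw [smul_dotProduct]; simp [smul_eq_mul]
  have h2 : (t • e) ⬝ᵥ A.mulVec u = t * (e ⬝ᵥ A.mulVec u) := by
    rw [smul_dotProduct]; simp [smul_eq_mul]
  have h3 : (t • e) ⬝ᵥ A.mulVec (s • z) = t * s * (e ⬝ᵥ A.mulVec z) := smul_dot_mulVec A t s e z
  have h4 : (t • e) ⬝ᵥ A.mulVec (t • e) = t * t * (e ⬝ᵥ A.mulVec e) := smul_dot_mulVec A t t e e
  rw [h1, h2, h3, h4]
  ring

lemma eps_exists (u z : Fin n → ℝ) (k m : Fin n) (hu0 : ∀ i, 0 ≤ u i)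
    (hpos : ∀ i, i ≠ k → i ≠ m → u i ≠ 0) (hzk : z k = 0) (hzm : z m = 0) :
    ∃ ε : ℝ, 0 < ε ∧ ∀ s : ℝ, |s| ≤ ε → ∀ i, 0 ≤ u i + s * z i := by
  classical
  set T := Finset.univ.filter (fun i : Fin n => i ≠ k ∧ i ≠ m) with hT
  have hzero : ∀ i, i ∉ T → z i = 0 := by
    intro i hi
    simp only [hT, Finset.mem_filter, Finset.mem_univ, true_and, not_and_or, not_not] at hi
    rcases hi with rfl | rfl
    · exact hzk
    · exact hzm
  rcases T.eq_empty_or_nonempty with hTe | hTne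
  · refine ⟨1, one_pos, fun s hs i => ?_⟩
    rw [hzero i (by simp [hTe]), mul_zero, add_zero]
    exact hu0 i
  · refine ⟨T.inf' hTne (fun i => u i / (|z i| + 1)), ?_, ?_⟩
    · rw [Finset.lt_inf'_iff]
      intro i hi
      simp only [hT, Finset.mem_filter, Finset.mem_univ, true_and] at hi
      have : 0 < u i := lt_of_le_of_ne (hu0 i) (Ne.symm (hpos i hi.1 hi.2))
      positivity
    · intro s hs i
      by_cases hi : i ∈ T
      · have hle : T.inf' hTne (fun i => u i / (|z i| + 1)) ≤ u i / (|z i| + 1) :=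
          Finset.inf'_le _ hi
        have habs : |s| ≤ u i / (|z i| + 1) := le_trans hs hle
        have hzl : (0:ℝ) < |z i| + 1 := by positivity
        have h1 : |s| * (|z i| + 1) ≤ u i := by
          rw [← le_div_iff₀ hzl]; exact habs
        have h2 : -(|s| * |z i|) ≤ s * z i := by
          rw [← abs_mul]; exact neg_abs_le _
        nlinarith [abs_nonneg s, abs_nonneg (z i)]
      · rw [hzero i hi, mul_zero, add_zero]; exact hu0 i

lemma hyperplane_psd (A : Matrix (Fin n) (Fin n) ℝ) (hA : A.IsSymm) (hcop : Copositive A)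
    (u : Fin n → ℝ) (hu0 : ∀ i, 0 ≤ u i) (huz : u ⬝ᵥ A.mulVec u = 0)
    (k m : Fin n) (hpos : ∀ i, i ≠ k → i ≠ m → u i ≠ 0)
    (hAu' : ∀ i, i ≠ k → A.mulVec u i = 0) :
    ∀ y : Fin n → ℝ, y k = 0 → 0 ≤ y ⬝ᵥ A.mulVec y := by
  classical
  intro y hyk
  by_cases hmk : m = k
  · have hpos' : ∀ i, i ≠ k → i ≠ k → u i ≠ 0 := fun i h _ => hpos i h (hmk ▸ h)
    obtain ⟨ε, hε, hbd⟩ := eps_exists u y k k hu0 hpos' hyk hyk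
    have hyAu : y ⬝ᵥ A.mulVec u = 0 := by
      apply Finset.sum_eq_zero
      intro i _
      rcases eq_or_ne i k with rfl | hik
      · rw [hyk, zero_mul]
      · rw [hAu' i hik, mul_zero]
    have hx : ∀ i, 0 ≤ (u + ε • y + (0:ℝ) • y) i := by
      intro i
      have := hbd ε (by rw [abs_of_pos hε]) i
      simpa using this
    have h := hcop _ hx
    rw [qf_comb A hA u y y ε 0, huz, hyAu] at h
    nlinarith [mul_pos hε hε]
  · have hkm : k ≠ m := fun h => hmk h.symm
    set z := Function.update y m 0 with hz
    have hzk : z k = 0 := by rw [hz, Function.update_of_ne hkm, hyk]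
    have hzm : z m = 0 := by rw [hz, Function.update_self]
    set e := (Pi.single m 1 : Fin n → ℝ) with he
    have hy_decomp : y = z + y m • e := by
      funext i
      rcases eq_or_ne i m with rfl | him
      · simp [hz, he, Function.update_self]
      · simp [hz, he, Function.update_of_ne him, Pi.single_eq_of_ne him]
    obtain ⟨ε, hε, hbd⟩ := eps_exists u z k m hu0 hpos hzk hzm
    set α := z ⬝ᵥ A.mulVec z with hα
    set β := e ⬝ᵥ A.mulVec z with hβ
    set γ := e ⬝ᵥ A.mulVec e with hγ
    have hzAu : z ⬝ᵥ A.mulVec u = 0 := by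
      apply Finset.sum_eq_zero
      intro i _
      rcases eq_or_ne i k with rfl | hik
      · rw [hzk, zero_mul]
      · rw [hAu' i hik, mul_zero]
    have heAu : e ⬝ᵥ A.mulVec u = 0 := by
      rw [he, single_dotProduct, one_mul, hAu' m hmk]
    have key : ∀ s t : ℝ, |s| ≤ ε → 0 ≤ t → 0 ≤ α * s ^ 2 + 2 * β * s * t + γ * t ^ 2 := by
      intro s t hs ht
      have hx : ∀ i, 0 ≤ (u + s • z + t • e) i := by
        intro i
        rcases eq_or_ne i m with rfl | him
        · simp only [Pi.add_apply, Pi.smul_apply, smul_eq_mul, hzm, mul_zero, add_zero, he,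
            Pi.single_eq_same, mul_one]
          exact add_nonneg (hu0 i) ht
        · simp only [Pi.add_apply, Pi.smul_apply, smul_eq_mul, he, Pi.single_eq_of_ne him,
            mul_zero, add_zero]
          exact hbd s hs i
      have h := hcop _ hx
      rw [qf_comb A hA u z e s t, huz, hzAu, heAu] at h
      rw [← hα, ← hβ, ← hγ] at h
      nlinarith
    obtain ⟨hα0, hγ0, hβ0⟩ := quad_key hε key
    have hqf : y ⬝ᵥ A.mulVec y = α + 2 * y m * β + (y m) ^ 2 * γ := by
      conv_lhs => rw [hy_decomp]
      rw [qf_add' A hA z (y m • e), smul_dot_mulVec A (y m) (y m) e e]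
      have : (y m • e) ⬝ᵥ A.mulVec z = y m * β := by
        rw [smul_dotProduct]; simp [smul_eq_mul, hβ]
      rw [this]
      ring
    rw [hqf]
    rcases eq_or_lt_of_le hα0 with h0 | h0
    · have hβz : β = 0 := by nlinarith
      nlinarith [mul_nonneg (sq_nonneg (y m)) hγ0]
    · nlinarith [sq_nonneg (α + y m * β), sq_nonneg (y m), mul_pos h0 h0]

lemma isHermitian_of_isSymm' (A : Matrix (Fin n) (Fin n) ℝ) (h : A.IsSymm) : A.IsHermitian :=
  Matrix.ext fun i j => by rw [Matrix.conjTranspose_apply, star_trivial, h.apply]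

lemma dot_self_nonneg' (x : Fin n → ℝ) : 0 ≤ x ⬝ᵥ x :=
  Finset.sum_nonneg fun i _ => mul_self_nonneg (x i)

lemma dot_self_eq_zero' {x : Fin n → ℝ} (h : x ⬝ᵥ x = 0) : x = 0 := by
  funext i
  have h0 := (Finset.sum_eq_zero_iff_of_nonneg
    (fun j (_ : j ∈ Finset.univ) => mul_self_nonneg (x j))).1 h i (Finset.mem_univ i)
  have := mul_self_eq_zero.1 h0
  simpa using this

lemma pi_decomp (x : Fin n → ℝ) : x = ∑ i, x i • (Pi.single i 1 : Fin n → ℝ) := by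
  funext j
  rw [Finset.sum_apply]
  simp [Pi.single_apply]

lemma real_contra_lemma {s c β : ℝ} (hs : 0 ≤ s) (hc : 0 ≤ c)
    (hβ : β < -(Real.sqrt c * Real.sqrt s))
    (hq : ∀ t : ℝ, 0 ≤ t → 0 ≤ s + 2 * β * t + c * t ^ 2) : False := by
  have hsq : Real.sqrt c * Real.sqrt s < -β := by linarith
  have hnn : 0 ≤ Real.sqrt c * Real.sqrt s := by positivity
  have hβneg : β < 0 := by nlinarith
  have hβsq : c * s < β ^ 2 := by
    have h2 : (Real.sqrt c * Real.sqrt s) ^ 2 < (-β) ^ 2 := by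
      apply pow_lt_pow_left₀ hsq hnn
      norm_num
    rw [mul_pow, Real.sq_sqrt hc, Real.sq_sqrt hs] at h2
    nlinarith
  rcases eq_or_lt_of_le hc with hc0 | hc0
  · have ht : (0:ℝ) ≤ (s + 1) / (-2 * β) := by
      apply div_nonneg (by linarith) (by linarith)
    have := hq _ ht
    rw [← hc0] at this
    have h3 : 2 * β * ((s + 1) / (-2 * β)) = -(s + 1) := by
      rw [mul_comm (2*β), div_mul_eq_mul_div, div_eq_iff (by linarith : (-2 * β) ≠ 0)]
      ring
    nlinarith
  · have ht : (0:ℝ) ≤ -β / c := div_nonneg (by linarith) hc0.le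
    have := hq _ ht
    have h3 : s + 2 * β * (-β / c) + c * (-β / c) ^ 2 = s - β ^ 2 / c := by
      field_simp; ring
    rw [h3] at this
    have h4 : β ^ 2 / c > s := by
      rw [gt_iff_lt, lt_div_iff₀ hc0]
      nlinarith
    linarith

lemma dot_vecMulVec (u v x y : Fin n → ℝ) :
    x ⬝ᵥ (Matrix.vecMulVec u v).mulVec y = (x ⬝ᵥ u) * (v ⬝ᵥ y) := by
  unfold dotProduct Matrix.mulVec Matrix.vecMulVec
  simp only [Matrix.of_apply, dotProduct]
  rw [Finset.sum_mul]
  apply Finset.sum_congr rfl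
  intro i _
  rw [Finset.mul_sum, Finset.mul_sum]
  apply Finset.sum_congr rfl
  intro j _
  ring

open scoped MatrixOrder in
lemma spn_of_hyperplane_psd (A : Matrix (Fin n) (Fin n) ℝ) (hA : A.IsSymm) (hcop : Copositive A)
    (k : Fin n) (hhyp : ∀ y : Fin n → ℝ, y k = 0 → 0 ≤ y ⬝ᵥ A.mulVec y) : IsSPN A := by
  classical
  set c := A k k with hc_def
  set ek := (Pi.single k 1 : Fin n → ℝ) with hek
  have hek_dot : ∀ v : Fin n → ℝ, ek ⬝ᵥ v = v k := by
    intro v; rw [hek, single_dotProduct, one_mul]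
  have hdot_ek : ∀ v : Fin n → ℝ, v ⬝ᵥ ek = v k := by
    intro v; rw [hek, dotProduct_single, mul_one]
  have hc : 0 ≤ c := by
    have h0 : ∀ i, 0 ≤ ek i := by
      intro i
      rcases eq_or_ne i k with rfl | hik
      · simp [hek]
      · simp [hek, Pi.single_eq_of_ne hik]
    have := hcop ek h0
    rw [hek_dot, Matrix.mulVec_single] at this
    simpa using this
  -- the bordered matrix
  set B : Matrix (Fin n) (Fin n) ℝ :=
    Matrix.of (fun i j => if i = k ∨ j = k then 0 else A i j) with hB_def
  have hBsym : B.IsSymm := by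
    apply Matrix.IsSymm.ext
    intro i j
    simp only [hB_def, Matrix.of_apply]
    by_cases h : i = k ∨ j = k
    · rw [if_pos h.symm, if_pos h]
    · rw [if_neg (fun hh => h (Or.symm hh)), if_neg h]
      exact hA.apply i j
  have hBx : ∀ x : Fin n → ℝ,
      x ⬝ᵥ B.mulVec x = (Function.update x k 0) ⬝ᵥ A.mulVec (Function.update x k 0) := by
    intro x
    unfold dotProduct Matrix.mulVec
    simp only [dotProduct]
    apply Finset.sum_congr rfl
    intro i _
    rw [Finset.mul_sum, Finset.mul_sum]
    apply Finset.sum_congr rfl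
    intro j _
    rcases eq_or_ne i k with rfl | hik
    · simp [hB_def, Function.update_self]
    · rcases eq_or_ne j k with rfl | hjk
      · simp [hB_def, Function.update_self]
      · simp [hB_def, hik, hjk, Function.update_of_ne hik, Function.update_of_ne hjk]
  have hBpsd : B.PosSemidef := by
    refine Matrix.PosSemidef.of_dotProduct_mulVec_nonneg (isHermitian_of_isSymm' B hBsym) fun x => ?_
    have hx : (Function.update x k 0) k = 0 := Function.update_self k 0 x
    have := hhyp _ hx
    rw [star_trivial]
    rw [hBx x]
    exact this
  set Q := CFC.sqrt B with hQ_def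
  have hQQ : Q * Q = B := CFC.sqrt_mul_sqrt_self B hBpsd.nonneg
  have hQpsd : Q.PosSemidef := (CFC.sqrt_nonneg B).posSemidef
  have hQsym : Q.IsSymm := by
    apply Matrix.IsSymm.ext
    intro i j
    have := hQpsd.1
    calc Q j i = star (Q i j) := by rw [← Matrix.conjTranspose_apply, this]
    _ = Q i j := star_trivial _
  have hQBdot : ∀ x : Fin n → ℝ, (Q.mulVec x) ⬝ᵥ (Q.mulVec x) = x ⬝ᵥ B.mulVec x := by
    intro x
    calc (Q.mulVec x) ⬝ᵥ (Q.mulVec x) = x ⬝ᵥ Q.mulVec (Q.mulVec x) :=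
        dot_mulVec_symm' Q hQsym _ _
    _ = x ⬝ᵥ (Q * Q).mulVec x := by rw [Matrix.mulVec_mulVec]
    _ = x ⬝ᵥ B.mulVec x := by rw [hQQ]
  have hBkk : B k k = 0 := by simp [hB_def]
  have hQk : Q.mulVec ek = 0 := by
    apply dot_self_eq_zero'
    rw [hQBdot]
    have : B.mulVec ek = fun i => B i k := by
      rw [hek, Matrix.mulVec_single_one]
      funext i; rfl
    rw [this, hek_dot]
    exact hBkk
  have hQwk : ∀ w : Fin n → ℝ, Q.mulVec w k = 0 := by
    intro w
    have h1 : ek ⬝ᵥ Q.mulVec w = Q.mulVec w k := hek_dot _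
    rw [← h1, dot_mulVec_symm' Q hQsym, hQk, dotProduct_zero]
  set b : Fin n → ℝ := fun i => if i = k then 0 else A i k with hb_def
  -- main existence claim via separation
  have main : ∃ w : Fin n → ℝ, w ⬝ᵥ w ≤ 1 ∧ ∀ i, Real.sqrt c * Q.mulVec w i ≤ b i := by
    by_contra hcon
    push_neg at hcon
    set L : (Fin n → ℝ) → (Fin n → ℝ) := fun w => Real.sqrt c • Q.mulVec w with hL
    set K : Set (Fin n → ℝ) := {w | w ⬝ᵥ w ≤ 1} with hK
    set E : Set (Fin n → ℝ) := L '' K with hE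
    set F : Set (Fin n → ℝ) := {q | ∀ i, q i ≤ b i} with hF
    have hdisj : Disjoint E F := by
      rw [Set.disjoint_left]
      rintro p ⟨w, hwK, rfl⟩ hpF
      obtain ⟨i, hi⟩ := hcon w hwK
      exact absurd (hpF i) (by simpa [hL] using not_le.2 hi)
    have hKcvx : Convex ℝ K := by
      intro w1 h1 w2 h2 a b' ha hb' hab
      simp only [hK, Set.mem_setOf_eq] at h1 h2 ⊢
      have hcs : (w1 ⬝ᵥ w2) ^ 2 ≤ (w1 ⬝ᵥ w1) * (w2 ⬝ᵥ w2) := by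
        have := Finset.sum_mul_sq_le_sq_mul_sq Finset.univ w1 w2
        simpa [dotProduct, pow_two] using this
      have hs1 : 0 ≤ w1 ⬝ᵥ w1 := dot_self_nonneg' w1
      have hs2 : 0 ≤ w2 ⬝ᵥ w2 := dot_self_nonneg' w2
      have hd1 : w1 ⬝ᵥ w2 ≤ 1 := by nlinarith
      have hexp : (a • w1 + b' • w2) ⬝ᵥ (a • w1 + b' • w2)
          = a ^ 2 * (w1 ⬝ᵥ w1) + 2 * (a * b') * (w1 ⬝ᵥ w2) + b' ^ 2 * (w2 ⬝ᵥ w2) := by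
        rw [dotProduct_add, add_dotProduct, add_dotProduct, smul_dotProduct, smul_dotProduct,
          smul_dotProduct, smul_dotProduct, dotProduct_smul, dotProduct_smul, dotProduct_smul,
          dotProduct_smul, dotProduct_comm w2 w1]
        simp only [smul_eq_mul]
        ring
      rw [hexp]
      nlinarith [mul_nonneg ha hb']
    have hEcvx : Convex ℝ E := by
      apply Convex.is_linear_image hKcvx
      constructor
      · intro w1 w2
        simp only [hL, Matrix.mulVec_add, smul_add]
      · intro r w
        simp only [hL, Matrix.mulVec_smul]
        rw [smul_comm]
    have hKcomp : IsCompact K := by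
      have hcl : IsClosed K := by
        have : K = {w : Fin n → ℝ | w ⬝ᵥ w ≤ 1} := rfl
        apply IsClosed.preimage (f := fun w : Fin n → ℝ => w ⬝ᵥ w) ?_ (isClosed_Iic (a := (1:ℝ)))
        exact continuous_finset_sum _ fun i _ => (continuous_apply i).mul (continuous_apply i)
      have hsub : K ⊆ Metric.closedBall 0 1 := by
        intro w hw
        rw [Metric.mem_closedBall, dist_zero_right]
        rw [pi_norm_le_iff_of_nonneg zero_le_one]
        intro i
        rw [Real.norm_eq_abs, abs_le]
        have h1 : w i * w i ≤ w ⬝ᵥ w :=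
          Finset.single_le_sum (f := fun j => w j * w j)
            (fun j _ => mul_self_nonneg (w j)) (Finset.mem_univ i)
        have h2 : w i * w i ≤ 1 := le_trans h1 hw
        constructor <;> nlinarith
      exact (isCompact_closedBall 0 1).of_isClosed_subset hcl hsub
    have hEcomp : IsCompact E := by
      apply hKcomp.image
      have h1 : Continuous fun w : Fin n → ℝ => Q.mulVec w := by
        have := LinearMap.continuous_of_finiteDimensional (Matrix.mulVecLin Q)
        exact this
      show Continuous (fun w => Real.sqrt c • Q.mulVec w)
      exact (continuous_const : Continuous fun _ : Fin n → ℝ => Real.sqrt c).smul h1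
    have hFcl : IsClosed F := by
      have : F = ⋂ i, {q : Fin n → ℝ | q i ≤ b i} := by
        ext q; simp [hF, Set.mem_iInter]
      rw [this]
      exact isClosed_iInter fun i => isClosed_le (continuous_apply i) continuous_const
    have hFcvx : Convex ℝ F := by
      intro q1 h1 q2 h2 a b' ha hb' hab
      intro i
      simp only [Pi.add_apply, Pi.smul_apply, smul_eq_mul]
      calc a * q1 i + b' * q2 i ≤ a * b i + b' * b i := by
            apply add_le_add
            · exact mul_le_mul_of_nonneg_left (h1 i) ha
            · exact mul_le_mul_of_nonneg_left (h2 i) hb'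
      _ = b i := by rw [← add_mul, hab, one_mul]
    obtain ⟨f, u0, v0, hEu, huv, hFv⟩ :=
      geometric_hahn_banach_compact_closed hEcvx hEcomp hFcvx hFcl hdisj
    set g : Fin n → ℝ := fun i => f (Pi.single i 1) with hg
    have hf : ∀ x : Fin n → ℝ, f x = ∑ i, x i * g i := by
      intro x
      conv_lhs => rw [pi_decomp x]
      rw [map_sum]
      apply Finset.sum_congr rfl
      intro i _
      rw [_root_.map_smul, smul_eq_mul, hg]
    have hbF : b ∈ F := fun i => le_rfl
    have hfb : v0 < f b := hFv b hbF
    have hgle : ∀ i, g i ≤ 0 := by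
      intro i
      by_contra hgi
      push_neg at hgi
      set t : ℝ := (f b - v0 + 1) / g i with ht_def
      have ht : 0 < t := by
        apply div_pos _ hgi
        linarith
      have hqF : (b - t • (Pi.single i 1 : Fin n → ℝ)) ∈ F := by
        intro j
        rcases eq_or_ne j i with rfl | hji
        · simp only [Pi.sub_apply, Pi.smul_apply, Pi.single_eq_same, smul_eq_mul, mul_one]
          linarith
        · simp [Pi.single_eq_of_ne hji]
      have := hFv _ hqF
      rw [_root_.map_sub, _root_.map_smul, smul_eq_mul] at this
      have this2 : v0 < f b - t * g i := this
      have htg : t * g i = f b - v0 + 1 := by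
        rw [ht_def, div_mul_cancel₀]
        exact ne_of_gt hgi
      rw [htg] at this2
      linarith
    set y : Fin n → ℝ := fun i => if i = k then 0 else -g i with hy_def
    have hy0 : ∀ i, 0 ≤ y i := by
      intro i
      by_cases hik : i = k
      · simp [hy_def, hik]
      · simpa [hy_def, hik] using neg_nonneg.2 (hgle i)
    have hyk : y k = 0 := by simp [hy_def]
    have hfneg : ∀ p : Fin n → ℝ, p k = 0 → f p = -(p ⬝ᵥ y) := by
      intro p hpk
      rw [hf p]
      unfold dotProduct
      rw [← Finset.sum_neg_distrib]
      apply Finset.sum_congr rfl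
      intro i _
      rcases eq_or_ne i k with rfl | hik
      · rw [hpk]; simp
      · simp only [hy_def, if_neg hik]
        ring
    have hfb_eq : f b = -(b ⬝ᵥ y) := by
      apply hfneg
      simp [hb_def]
    set q0 : Fin n → ℝ := Q.mulVec y with hq0
    set s : ℝ := q0 ⬝ᵥ q0 with hs_def
    have hs0 : 0 ≤ s := dot_self_nonneg' q0
    set wstar : Fin n → ℝ := if s = 0 then 0 else (-(Real.sqrt s)⁻¹) • q0 with hw_def
    have hwK : wstar ∈ K := by
      rw [hK, Set.mem_setOf_eq, hw_def]
      by_cases hsz : s = 0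
      · rw [if_pos hsz]; simp
      · rw [if_neg hsz]
        have hspos : 0 < s := lt_of_le_of_ne hs0 (Ne.symm hsz)
        have hsqrtne : Real.sqrt s ≠ 0 := ne_of_gt (Real.sqrt_pos.2 hspos)
        rw [smul_dotProduct, dotProduct_smul]
        simp only [smul_eq_mul]
        rw [show q0 ⬝ᵥ q0 = s from hs_def.symm]
        have hcalc : -(Real.sqrt s)⁻¹ * (-(Real.sqrt s)⁻¹ * s) = 1 := by
          have h2 : Real.sqrt s * Real.sqrt s = s := Real.mul_self_sqrt hs0
          field_simp
          rw [Real.sq_sqrt hs0]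

        linarith [hcalc]
    have hpE : L wstar ∈ E := ⟨wstar, hwK, rfl⟩
    have hpk : L wstar k = 0 := by
      simp only [hL, Pi.smul_apply, smul_eq_mul, hQwk wstar, mul_zero]
    have hfp : f (L wstar) = -((L wstar) ⬝ᵥ y) := hfneg _ hpk
    have hLdot : (L wstar) ⬝ᵥ y = -(Real.sqrt c * Real.sqrt s) := by
      have h1 : (L wstar) ⬝ᵥ y = Real.sqrt c * (Q.mulVec wstar ⬝ᵥ y) := by
        show (Real.sqrt c • Q.mulVec wstar) ⬝ᵥ y = _
        rw [smul_dotProduct]; simp [smul_eq_mul]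
      have h2 : Q.mulVec wstar ⬝ᵥ y = wstar ⬝ᵥ q0 := by
        rw [dotProduct_comm, dot_mulVec_symm' Q hQsym y wstar, hq0]
      have h3 : wstar ⬝ᵥ q0 = -Real.sqrt s := by
        rw [hw_def]
        by_cases hsz : s = 0
        · rw [if_pos hsz, hsz, Real.sqrt_zero]; simp
        · rw [if_neg hsz, smul_dotProduct]
          simp only [smul_eq_mul]
          rw [show q0 ⬝ᵥ q0 = s from hs_def.symm]
          have hspos : 0 < s := lt_of_le_of_ne hs0 (Ne.symm hsz)
          have h4 : -(Real.sqrt s)⁻¹ * s = -(s / Real.sqrt s) := by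
            rw [neg_mul, inv_mul_eq_div]
          rw [h4, Real.div_sqrt]
      rw [h1, h2, h3]; ring
    have hβlt : b ⬝ᵥ y < -(Real.sqrt c * Real.sqrt s) := by
      have h4 : f (L wstar) < f b := lt_trans (lt_trans (hEu _ hpE) huv) (hFv b hbF)
      rw [hfp, hfb_eq, hLdot] at h4
      linarith
    have hAyk : A.mulVec y k = b ⬝ᵥ y := by
      unfold Matrix.mulVec dotProduct
      apply Finset.sum_congr rfl
      intro j _
      rcases eq_or_ne j k with rfl | hjk
      · rw [hyk]; simp
      · rw [hb_def]
        simp only [if_neg hjk]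
        rw [hA.apply j k]
    have hq : ∀ t : ℝ, 0 ≤ t → 0 ≤ s + 2 * (b ⬝ᵥ y) * t + c * t ^ 2 := by
      intro t ht
      have hx : ∀ i, 0 ≤ (y + t • ek) i := by
        intro i
        rcases eq_or_ne i k with rfl | hik
        · simp only [Pi.add_apply, Pi.smul_apply, smul_eq_mul, hyk, hek, Pi.single_eq_same,
            mul_one, zero_add]
          exact ht
        · simp only [Pi.add_apply, Pi.smul_apply, smul_eq_mul, hek, Pi.single_eq_of_ne hik,
            mul_zero, add_zero]
          exact hy0 i
      have h5 := hcop _ hx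
      rw [qf_add' A hA y (t • ek)] at h5
      have h6 : (t • ek) ⬝ᵥ A.mulVec y = t * (b ⬝ᵥ y) := by
        rw [smul_dotProduct]
        simp only [smul_eq_mul]
        rw [hek_dot, hAyk]
      have h7 : (t • ek) ⬝ᵥ A.mulVec (t • ek) = c * t ^ 2 := by
        rw [smul_dot_mulVec]
        have h8 : ek ⬝ᵥ A.mulVec ek = c := by
          rw [hek_dot, hek, Matrix.mulVec_single]
          simp [hc_def]
        rw [h8]; ring
      have h9 : y ⬝ᵥ A.mulVec y = s := by
        have h10 : Function.update y k 0 = y := by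
          funext j
          rcases eq_or_ne j k with rfl | hjk
          · rw [Function.update_self, hyk]
          · rw [Function.update_of_ne hjk]
        have h11 := hBx y
        rw [h10] at h11
        have h12 := hQBdot y
        calc y ⬝ᵥ A.mulVec y = y ⬝ᵥ B.mulVec y := h11.symm
        _ = (Q.mulVec y) ⬝ᵥ (Q.mulVec y) := h12.symm
        _ = q0 ⬝ᵥ q0 := by rw [hq0]
        _ = s := hs_def.symm
      rw [h6, h7, h9] at h5
      linarith
    exact real_contra_lemma hs0 hc hβlt hq
  -- use the found w to build the decomposition
  obtain ⟨w, hwK, hwb⟩ := main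
  set p : Fin n → ℝ := fun i => Real.sqrt c * Q.mulVec w i with hp_def
  have hpk : p k = 0 := by rw [hp_def]; simp [hQwk w]
  have hpb : ∀ i, p i ≤ b i := hwb
  have hσ0 : ∀ x : Fin n → ℝ, 0 ≤ x ⬝ᵥ B.mulVec x := by
    intro x
    have := dot_self_nonneg' (Q.mulVec x)
    rwa [hQBdot] at this
  have hpCS : ∀ x : Fin n → ℝ, (p ⬝ᵥ x) ^ 2 ≤ c * (x ⬝ᵥ B.mulVec x) := by
    intro x
    have h1 : p ⬝ᵥ x = Real.sqrt c * (Q.mulVec w ⬝ᵥ x) := by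
      unfold dotProduct
      rw [Finset.mul_sum]
      apply Finset.sum_congr rfl
      intro i _
      rw [hp_def]; ring
    have h2 : Q.mulVec w ⬝ᵥ x = w ⬝ᵥ Q.mulVec x := by
      rw [dotProduct_comm, dot_mulVec_symm' Q hQsym x w]
    have h3 : (w ⬝ᵥ Q.mulVec x) ^ 2 ≤ (w ⬝ᵥ w) * ((Q.mulVec x) ⬝ᵥ (Q.mulVec x)) := by
      have := Finset.sum_mul_sq_le_sq_mul_sq Finset.univ w (Q.mulVec x)
      simpa [dotProduct, pow_two] using this
    have h4 : (Q.mulVec x) ⬝ᵥ (Q.mulVec x) = x ⬝ᵥ B.mulVec x := hQBdot x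
    have h5 : 0 ≤ x ⬝ᵥ B.mulVec x := hσ0 x
    have h6 : 0 ≤ (Q.mulVec x) ⬝ᵥ (Q.mulVec x) := dot_self_nonneg' _
    have hcsq : Real.sqrt c ^ 2 = c := Real.sq_sqrt hc
    rw [h1, mul_pow, hcsq, h2]
    have h7 : (w ⬝ᵥ Q.mulVec x) ^ 2 ≤ x ⬝ᵥ B.mulVec x := by
      calc (w ⬝ᵥ Q.mulVec x) ^ 2 ≤ (w ⬝ᵥ w) * ((Q.mulVec x) ⬝ᵥ (Q.mulVec x)) := h3
      _ ≤ 1 * ((Q.mulVec x) ⬝ᵥ (Q.mulVec x)) := by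
          apply mul_le_mul_of_nonneg_right hwK h6
      _ = x ⬝ᵥ B.mulVec x := by rw [one_mul, h4]
    exact mul_le_mul_of_nonneg_left h7 hc
  set P : Matrix (Fin n) (Fin n) ℝ :=
    B + Matrix.vecMulVec p ek + Matrix.vecMulVec ek p + c • Matrix.vecMulVec ek ek with hP_def
  have hPapply : ∀ i j, P i j = B i j + p i * ek j + ek i * p j + c * (ek i * ek j) := by
    intro i j
    rw [hP_def]
    simp [Matrix.add_apply, Matrix.smul_apply, Matrix.vecMulVec_apply, smul_eq_mul, mul_assoc]
  have hPsym : P.IsSymm := by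
    apply Matrix.IsSymm.ext
    intro i j
    rw [hPapply, hPapply, hBsym.apply i j]
    ring
  have hPq : ∀ x : Fin n → ℝ, x ⬝ᵥ P.mulVec x
      = x ⬝ᵥ B.mulVec x + 2 * (x k) * (p ⬝ᵥ x) + c * (x k) ^ 2 := by
    intro x
    rw [hP_def, Matrix.add_mulVec, Matrix.add_mulVec, Matrix.add_mulVec,
      dotProduct_add, dotProduct_add, dotProduct_add, Matrix.smul_mulVec,
      dotProduct_smul, dot_vecMulVec p ek x x, dot_vecMulVec ek p x x,
      dot_vecMulVec ek ek x x]
    simp only [hek_dot, hdot_ek, smul_eq_mul]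
    rw [dotProduct_comm x p]
    ring
  have hPpsd : P.PosSemidef := by
    refine Matrix.PosSemidef.of_dotProduct_mulVec_nonneg (isHermitian_of_isSymm' P hPsym) fun x => ?_
    rw [star_trivial, hPq x]
    have hσ : 0 ≤ x ⬝ᵥ B.mulVec x := hσ0 x
    have hδ : (p ⬝ᵥ x) ^ 2 ≤ c * (x ⬝ᵥ B.mulVec x) := hpCS x
    rcases eq_or_lt_of_le hσ with h0 | h0
    · have hδ2 : (p ⬝ᵥ x) ^ 2 ≤ 0 := by rw [← h0] at hδ; linarith [hδ]
      have hδ0 : p ⬝ᵥ x = 0 := by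
        have := sq_nonneg (p ⬝ᵥ x)
        have : (p ⬝ᵥ x) ^ 2 = 0 := le_antisymm hδ2 this
        exact pow_eq_zero_iff (n := 2) (by norm_num) |>.1 this
      rw [hδ0, ← h0]
      nlinarith [sq_nonneg (x k), hc]
    · nlinarith [sq_nonneg (x ⬝ᵥ B.mulVec x + x k * (p ⬝ᵥ x)),
        mul_le_mul_of_nonneg_left hδ (sq_nonneg (x k))]
  refine ⟨P, A - P, hPpsd, hA.sub hPsym, ?_, by abel⟩
  intro i j
  rw [Matrix.sub_apply, hPapply i j]
  by_cases hik : i = k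
  · by_cases hjk : j = k
    · rw [hik, hjk, hBkk, hpk, ← hc_def]
      simp [hek]
    · rw [hik]
      have hBkj : B k j = 0 := by simp [hB_def]
      have hekk : ek k = 1 := by rw [hek]; simp
      have hekj : ek j = 0 := by rw [hek]; exact Pi.single_eq_of_ne hjk 1
      rw [hBkj, hekk, hekj, hpk]
      have := hpb j
      rw [hb_def] at this
      simp only [if_neg hjk] at this
      have hAij : A k j = A j k := hA.apply j k
      rw [hAij]
      linarith
  · by_cases hjk : j = k
    · rw [hjk]
      have hBik : B i k = 0 := by simp [hB_def]
      have heki : ek i = 0 := by rw [hek]; exact Pi.single_eq_of_ne hik 1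
      have hekj : ek k = 1 := by rw [hek]; simp
      rw [hBik, heki, hekj, hpk]
      have := hpb i
      rw [hb_def] at this
      simp only [if_neg hik] at this
      linarith
    · have hBij : B i j = A i j := by simp [hB_def, hik, hjk]
      have heki : ek i = 0 := by rw [hek]; exact Pi.single_eq_of_ne hik 1
      have hekj : ek j = 0 := by rw [hek]; exact Pi.single_eq_of_ne hjk 1
      rw [hBij, heki, hekj]
      simp


end CopositiveSPNAux

/-- If a copositive symmetric matrix `A` of order `n` has a zero `u`
with at least `n - 2` nonzero entries such that `A * u` has at least `n - 1` zero
entries, then `A` is SPN. -/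
theorem copositive_isSPN_of_zero_with_large_support
    (n : ℕ) (A : Matrix (Fin n) (Fin n) ℝ) (hA : A.IsSymm) (hcop : Copositive A)
    (u : Fin n → ℝ) (hu0 : ∀ i, 0 ≤ u i) (hune : u ≠ 0)
    (huz : u ⬝ᵥ A.mulVec u = 0)
    (hsupp : n - 2 ≤ (Finset.univ.filter fun i => u i ≠ 0).card)
    (hAu : n - 1 ≤ (Finset.univ.filter fun i => A.mulVec u i = 0).card) :
    IsSPN A := by
  classical
  rcases Nat.eq_zero_or_pos n with hn | hn
  · subst hn
    exact absurd (funext fun i => i.elim0) hune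
  have hcomp := comp_slack A hA hcop u hu0 huz
  set Zs := Finset.univ.filter (fun i => u i = 0) with hZs
  have hZcard : Zs.card ≤ 2 := by
    have h1 := Finset.card_filter_add_card_filter_not
      (s := (Finset.univ : Finset (Fin n))) (p := fun i : Fin n => u i ≠ 0)
    have h2 : Finset.univ.filter (fun i : Fin n => ¬ u i ≠ 0) = Zs := by
      apply Finset.filter_congr
      intro i _
      simp [not_not]
    rw [h2] at h1
    have h3 : (Finset.univ : Finset (Fin n)).card = n := by simp
    omega
  have finish : ∀ k m : Fin n, (∀ i, i ≠ k → A.mulVec u i = 0) →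
      (∀ i, i ≠ k → i ≠ m → u i ≠ 0) → IsSPN A := by
    intro k m hAu' hpos
    exact spn_of_hyperplane_psd A hA hcop k (hyperplane_psd A hA hcop u hu0 huz k m hpos hAu')
  haveI : Nonempty (Fin n) := ⟨⟨0, hn⟩⟩
  have cover_of_mem : ∀ k, k ∈ Zs → ∃ m, ∀ i, i ≠ k → i ≠ m → u i ≠ 0 := by
    intro k hk
    have h1 : (Zs.erase k).card ≤ 1 := by
      have := Finset.card_erase_of_mem hk
      omega
    obtain ⟨m, hm⟩ := Finset.card_le_one_iff_subset_singleton.1 h1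
    refine ⟨m, fun i hik him hiu => ?_⟩
    have h2 : i ∈ Zs.erase k := Finset.mem_erase.2 ⟨hik, by simp [hZs, hiu]⟩
    have := hm h2
    rw [Finset.mem_singleton] at this
    exact him this
  by_cases hex : ∃ j, A.mulVec u j ≠ 0
  · obtain ⟨j, hj⟩ := hex
    have huj : u j = 0 := by
      by_contra hju
      exact hj (hcomp j hju)
    have hjZ : j ∈ Zs := by simp [hZs, huj]
    obtain ⟨m, hm⟩ := cover_of_mem j hjZ
    have hAu' : ∀ i, i ≠ j → A.mulVec u i = 0 := by
      intro i hij
      by_contra hi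
      have hsub : ({i, j} : Finset (Fin n)) ⊆
          Finset.univ.filter (fun l => A.mulVec u l ≠ 0) := by
        intro x hx
        rcases Finset.mem_insert.1 hx with rfl | hx
        · simp [hi]
        · rw [Finset.mem_singleton] at hx
          subst hx
          simp [hj]
      have hcard2 : ({i, j} : Finset (Fin n)).card = 2 := Finset.card_pair hij
      have hle := Finset.card_le_card hsub
      have h1 := Finset.card_filter_add_card_filter_not
        (s := (Finset.univ : Finset (Fin n))) (p := fun i : Fin n => A.mulVec u i = 0)
      have h2 : Finset.univ.filter (fun i : Fin n => ¬ A.mulVec u i = 0)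
          = Finset.univ.filter (fun l : Fin n => A.mulVec u l ≠ 0) := rfl
      rw [h2] at h1
      have h3 : (Finset.univ : Finset (Fin n)).card = n := by simp
      omega
    exact finish j m hAu' hm
  · push_neg at hex
    rcases Finset.eq_empty_or_nonempty Zs with hZe | hZne
    · refine finish ⟨0, hn⟩ ⟨0, hn⟩ (fun i _ => hex i) ?_
      intro i _ _ hiu
      have : i ∈ Zs := by simp [hZs, hiu]
      rw [hZe] at this
      exact absurd this (Finset.notMem_empty i)
    · obtain ⟨k, hk⟩ := hZne
      obtain ⟨m, hm⟩ := cover_of_mem k hk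
      exact finish k m (fun i _ => hex i) hm
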